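/- (Stationarity of the Markovian solution) In the setting of the Markovian discounted BSDE, suppose additionally that X is time-homogeneous, i.e. A_t = A for all t, and that the Markovian driver f(ω,t,z) = f̃(X_t(ω),z) does not depend on t. Then the deterministic function v : ℕ × S → ℝ with Y_t = v(t,X_t) and e_kᵀZ_t = v(t+1,e_k) can be taken independent of t: there is v : S → ℝ with Y_t = v(X_t) and e_kᵀZ_t = v(e_k) for all t. -/

import Mathlib

open MeasureTheory Finset Filter

noncomputable section

namespace DiscreteEBSDE

variable {Ω : Type*} {mΩ : MeasurableSpace Ω} {N : ℕ}

/-- The standard basis vector `e i` of `ℝ^N`. -/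
def e (N : ℕ) (i : Fin N) : Fin N → ℝ := Pi.single i 1

/-- The Euclidean inner product on `ℝ^N`. -/
def dotR {N : ℕ} (z w : Fin N → ℝ) : ℝ := ∑ i, z i * w i

/-- The process `X` takes values in the standard basis of `ℝ^N`. -/
def BasisValued (X : ℕ → Ω → (Fin N → ℝ)) : Prop := ∀ t ω, ∃ i, X t ω = e N i

/-- The σ-algebra generated by `X 0, …, X t`. -/
def natSigma (X : ℕ → Ω → (Fin N → ℝ)) (t : ℕ) : MeasurableSpace Ω :=
  ⨆ s ∈ Set.Iic t, MeasurableSpace.comap (X s) inferInstance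

/-- `F` is the `P`-completion of the natural filtration of `X`:
a set is `F t`-measurable iff it agrees with a set of the natural σ-algebra up to a
`P`-null symmetric difference. -/
def IsCompletedNaturalFiltration (P : Measure Ω) (X : ℕ → Ω → (Fin N → ℝ))
    (F : Filtration ℕ mΩ) : Prop :=
  ∀ (t : ℕ) (A : Set Ω), MeasurableSet[F t] A ↔
    ∃ B : Set Ω, MeasurableSet[natSigma X t] B ∧ P (symmDiff A B) = 0

/-- The martingale difference `M (t+1) = X (t+1) - E[X (t+1) | F t]` (componentwise). -/
def Mdiff (P : Measure Ω) (F : Filtration ℕ mΩ) (X : ℕ → Ω → (Fin N → ℝ)) (t : ℕ)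
    (ω : Ω) : Fin N → ℝ :=
  fun i => X (t + 1) ω i - (P[(fun ω' => X (t + 1) ω' i)|F t]) ω

/-- The conditional second moment `‖Z‖²_{M_{t+1}} = E[(Zᵀ M_{t+1})² | F t]`. -/
def seminormSq (P : Measure Ω) (F : Filtration ℕ mΩ) (X : ℕ → Ω → (Fin N → ℝ))
    (t : ℕ) (Z : Ω → Fin N → ℝ) : Ω → ℝ :=
  P[(fun ω => (dotR (Z ω) (Mdiff P F X t ω)) ^ 2)|F t]

/-- The stochastic seminorm `‖Z‖_{M_{t+1}}`. -/
def mSeminorm (P : Measure Ω) (F : Filtration ℕ mΩ) (X : ℕ → Ω → (Fin N → ℝ))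
    (t : ℕ) (Z : Ω → Fin N → ℝ) (ω : Ω) : ℝ :=
  Real.sqrt (seminormSq P F X t Z ω)

/-- `Z ∼_{M_{t+1}} Z'`, i.e. `‖Z - Z'‖_{M_{t+1}} = 0` a.s. -/
def equivMt (P : Measure Ω) (F : Filtration ℕ mΩ) (X : ℕ → Ω → (Fin N → ℝ)) (t : ℕ)
    (Z Z' : Ω → Fin N → ℝ) : Prop :=
  seminormSq P F X t (fun ω => Z ω - Z' ω) =ᵐ[P] 0

/-- `Z ∼_M Z'`. -/
def equivM (P : Measure Ω) (F : Filtration ℕ mΩ) (X : ℕ → Ω → (Fin N → ℝ))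
    (Z Z' : ℕ → Ω → Fin N → ℝ) : Prop :=
  ∀ t, equivMt P F X t (Z t) (Z' t)

/-- A driver `f(ω,t,y,z)` is adapted if `(ω,y,z) ↦ f(ω,t,y,z)` is
`F t ⊗ B(ℝ) ⊗ B(ℝ^N)`-measurable for every `t`. -/
def DriverAdapted (F : Filtration ℕ mΩ) (f : Ω → ℕ → ℝ → (Fin N → ℝ) → ℝ) : Prop :=
  ∀ t : ℕ, Measurable[(F t).prod inferInstance]
    fun p : Ω × (ℝ × (Fin N → ℝ)) => f p.1 t p.2.1 p.2.2

/-- A column-stochastic transition matrix. -/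
def IsTransMat {n : ℕ} (A : Matrix (Fin n) (Fin n) ℝ) : Prop :=
  (∀ i j, 0 ≤ A i j) ∧ ∀ j, ∑ i, A i j = 1

/-- `X` is a Markov chain with transition matrices `A t`; since `X` is valued in the
standard basis this is equivalent to `E[X (t+1) | F t] = (A t) (X t)` a.s. -/
def IsMarkovChain (P : Measure Ω) (F : Filtration ℕ mΩ) (X : ℕ → Ω → (Fin N → ℝ))
    (A : ℕ → Matrix (Fin N) (Fin N) ℝ) : Prop :=
  (∀ t, IsTransMat (A t)) ∧
    ∀ (t : ℕ) (i : Fin N),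
      (P[(fun ω => X (t + 1) ω i)|F t]) =ᵐ[P] fun ω => (A t).mulVec (X t ω) i

/-- The atom of `F t` containing `ω₀` (the set of paths agreeing with `ω₀` up to time `t`). -/
def pathAtom (X : ℕ → Ω → (Fin N → ℝ)) (t : ℕ) (ω₀ : Ω) : Set Ω :=
  {ω' | ∀ s ≤ t, X s ω' = X s ω₀}

/-- `min_{i ∈ J_t^F} (z - z')ᵀ(e_i - E[X_{t+1} | F_t])` where `F` is the atom of `ω₀`
 at time `t` and `J_t^F = {i : P(X_{t+1} = e_i | F) > 0}`. -/
def minJump (P : Measure Ω) (F : Filtration ℕ mΩ) (X : ℕ → Ω → (Fin N → ℝ))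
    (t : ℕ) (ω₀ : Ω) (z z' : Fin N → ℝ) (ω : Ω) : ℝ :=
  sInf {r : ℝ | ∃ i : Fin N,
    0 < P ({ω' | X (t + 1) ω' = e N i} ∩ pathAtom X t ω₀) ∧
    r = dotR (z - z') (fun j => e N i j - (P[(fun ω'' => X (t + 1) ω'' j)|F t]) ω)}

/-- The comparison condition of the change-of-measure proposition: on every atom `F` of
`F t`, `f(ω,t,y,z) - f(ω,t,y,z') > min_{i ∈ J_t^F}{(z-z')ᵀ(e_i - E[X_{t+1}|F_t])}`, unless
this minimum is `0`, in which case equality holds. -/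
def ComparisonCondition (P : Measure Ω) (F : Filtration ℕ mΩ) (X : ℕ → Ω → (Fin N → ℝ))
    (f : Ω → ℕ → ℝ → (Fin N → ℝ) → ℝ) : Prop :=
  ∀ (t : ℕ) (y : ℝ) (z z' : Fin N → ℝ) (ω₀ : Ω), 0 < P (pathAtom X t ω₀) →
    ∀ᵐ ω ∂P, ω ∈ pathAtom X t ω₀ →
      (minJump P F X t ω₀ z z' ω = 0 → f ω t y z - f ω t y z' = 0) ∧
      (minJump P F X t ω₀ z z' ω ≠ 0 →
        minJump P F X t ω₀ z z' ω < f ω t y z - f ω t y z')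

/-- `f` is Lipschitz in `z` with constant `L`, w.r.t. the stochastic seminorm. -/
def DriverLipschitzNoY (P : Measure Ω) (F : Filtration ℕ mΩ) (X : ℕ → Ω → (Fin N → ℝ))
    (L : ℝ) (f : Ω → ℕ → (Fin N → ℝ) → ℝ) : Prop :=
  ∀ (t : ℕ) (Zt Z't : Ω → Fin N → ℝ),
    StronglyMeasurable[F t] Zt → StronglyMeasurable[F t] Z't →
    ∀ᵐ ω ∂P, |f ω t (Zt ω) - f ω t (Z't ω)| ≤
      L * mSeminorm P F X t (fun ω' => Zt ω' - Z't ω') ω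

/-- `(Y,Z)` is an adapted solution of the finite horizon BSDE with driver `f`,
horizon `T` and terminal condition `ξ`. -/
def SolvesFiniteBSDE (P : Measure Ω) (F : Filtration ℕ mΩ) (X : ℕ → Ω → (Fin N → ℝ))
    (f : Ω → ℕ → ℝ → (Fin N → ℝ) → ℝ) (T : ℕ) (ξ : Ω → ℝ)
    (Y : ℕ → Ω → ℝ) (Z : ℕ → Ω → Fin N → ℝ) : Prop :=
  Adapted F Y ∧ Adapted F Z ∧
    ∀ t ≤ T, ∀ᵐ ω ∂P,
      Y t ω - ∑ u ∈ Finset.Ico t T, f ω u (Y u ω) (Z u ω) +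
        ∑ u ∈ Finset.Ico t T, dotR (Z u ω) (Mdiff P F X u ω) = ξ ω

/-- `(Y,Z)` is an adapted solution of the infinite-horizon discounted BSDE
with discount rate `α` and driver `f` (independent of `y`). -/
def SolvesDiscountedBSDE (P : Measure Ω) (F : Filtration ℕ mΩ) (X : ℕ → Ω → (Fin N → ℝ))
    (α : ℝ) (f : Ω → ℕ → (Fin N → ℝ) → ℝ)
    (Y : ℕ → Ω → ℝ) (Z : ℕ → Ω → Fin N → ℝ) : Prop :=
  Adapted F Y ∧ Adapted F Z ∧
    ∀ t T : ℕ, t < T → ∀ᵐ ω ∂P,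
      Y T ω = Y t ω - ∑ u ∈ Finset.Ico t T, (f ω u (Z u ω) - α * Y u ω) +
        ∑ u ∈ Finset.Ico t T, dotR (Z u ω) (Mdiff P F X u ω)

/-- `(Y,Z,lam)` solves the Ergodic BSDE with Markovian driver `f`. -/
def SolvesEBSDE (P : Measure Ω) (F : Filtration ℕ mΩ) (X : ℕ → Ω → (Fin N → ℝ))
    (f : (Fin N → ℝ) → (Fin N → ℝ) → ℝ) (Y : ℕ → Ω → ℝ) (Z : ℕ → Ω → Fin N → ℝ)
    (lam : ℝ) : Prop :=
  ∀ t T : ℕ, t < T → ∀ᵐ ω ∂P,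
    Y T ω = Y t ω - ∑ u ∈ Finset.Ico t T, (f (X u ω) (Z u ω) - lam) +
      ∑ u ∈ Finset.Ico t T, dotR (Z u ω) (Mdiff P F X u ω)

/-- Ratio with the convention `0/0 := 1`. -/
def balRatio (a b : ℝ) : ℝ := if a = 0 ∧ b = 0 then 1 else a / b

/-- The driver `f(ω,t,y,z)` is `γ`-balanced. -/
def IsGammaBalanced (P : Measure Ω) (F : Filtration ℕ mΩ) (X : ℕ → Ω → (Fin N → ℝ))
    (A : ℕ → Matrix (Fin N) (Fin N) ℝ) (γ : ℝ)
    (f : Ω → ℕ → ℝ → (Fin N → ℝ) → ℝ) : Prop :=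
  ∃ ψ : Ω → ℕ → (Fin N → ℝ) → (Fin N → ℝ) → (Fin N → ℝ),
    (∀ t : ℕ, Measurable[(F t).prod inferInstance]
      fun p : Ω × ((Fin N → ℝ) × (Fin N → ℝ)) => ψ p.1 t p.2.1 p.2.2) ∧
    ∀ (t : ℕ) (y : ℝ) (z z' : Fin N → ℝ), ∀ᵐ ω ∂P,
      f ω t y z - f ω t y z' =
          dotR (z - z') (fun i => ψ ω t z z' i - (A t).mulVec (X t ω) i) ∧
        (∀ i, balRatio (ψ ω t z z' i) ((A t).mulVec (X t ω) i) ∈ Set.Icc γ γ⁻¹) ∧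
        ∑ i, ψ ω t z z' i = 1

/-- The driver `f(ω,t,z)` (independent of `y`) is `γ`-balanced. -/
def IsGammaBalancedNoY (P : Measure Ω) (F : Filtration ℕ mΩ) (X : ℕ → Ω → (Fin N → ℝ))
    (A : ℕ → Matrix (Fin N) (Fin N) ℝ) (γ : ℝ)
    (f : Ω → ℕ → (Fin N → ℝ) → ℝ) : Prop :=
  ∃ ψ : Ω → ℕ → (Fin N → ℝ) → (Fin N → ℝ) → (Fin N → ℝ),
    (∀ t : ℕ, Measurable[(F t).prod inferInstance]
      fun p : Ω × ((Fin N → ℝ) × (Fin N → ℝ)) => ψ p.1 t p.2.1 p.2.2) ∧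
    ∀ (t : ℕ) (z z' : Fin N → ℝ), ∀ᵐ ω ∂P,
      f ω t z - f ω t z' =
          dotR (z - z') (fun i => ψ ω t z z' i - (A t).mulVec (X t ω) i) ∧
        (∀ i, balRatio (ψ ω t z z' i) ((A t).mulVec (X t ω) i) ∈ Set.Icc γ γ⁻¹) ∧
        ∑ i, ψ ω t z z' i = 1

/-- A probability vector on `Fin n`. -/
def IsProbVec {n : ℕ} (μ : Fin n → ℝ) : Prop := (∀ i, 0 ≤ μ i) ∧ ∑ i, μ i = 1

/-- Total variation distance between (signed) measures on a finite state space. -/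
def tvDist {n : ℕ} (μ ν : Fin n → ℝ) : ℝ := (∑ x, |μ x - ν x|) / 2

/-- Uniform ergodicity of the chain induced by the column-stochastic matrix `A`. -/
def UniformlyErgodic {n : ℕ} (A : Matrix (Fin n) (Fin n) ℝ) : Prop :=
  ∃ π : Fin n → ℝ, IsProbVec π ∧ ∃ R ρ : ℝ, 0 < R ∧ 0 < ρ ∧
    ∀ (t : ℕ) (μ : Fin n → ℝ), IsProbVec μ →
      tvDist ((A ^ t).mulVec μ) π ≤ R * Real.exp (-ρ * t)

section Aux

variable {Ω : Type*} {mΩ : MeasurableSpace Ω} {N : ℕ}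

lemma e_apply_self (i : Fin N) : e N i i = 1 := Pi.single_eq_same i 1

lemma e_apply_ne {i j : Fin N} (h : j ≠ i) : e N i j = 0 := Pi.single_eq_of_ne h 1

lemma e_inj {i j : Fin N} (h : e N i = e N j) : i = j := by
  by_contra hne
  have h1 : e N i i = 1 := e_apply_self i
  have h2 : e N j i = 0 := e_apply_ne hne
  rw [h, h2] at h1
  norm_num at h1

lemma dotR_e (v : Fin N → ℝ) (i : Fin N) : dotR v (e N i) = v i := by
  unfold dotR e
  rw [Finset.sum_eq_single i]
  · simp
  · intro k _ hk; simp [Pi.single_eq_of_ne hk]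
  · simp

variable (X : ℕ → Ω → Fin N → ℝ)

lemma mem_pathAtom_self (t : ℕ) (ω : Ω) : ω ∈ pathAtom X t ω := fun _ _ => rfl

lemma pathAtom_eq_of_mem {t : ℕ} {ω₀ ω₁ : Ω} (h : ω₁ ∈ pathAtom X t ω₀) :
    pathAtom X t ω₁ = pathAtom X t ω₀ :=
  Set.ext fun ω' => ⟨fun h' s hs => (h' s hs).trans (h s hs),
    fun h' s hs => (h' s hs).trans (h s hs).symm⟩

lemma natSigma_le_comap (t : ℕ) :
    natSigma X t ≤ MeasurableSpace.comap (fun ω (s : Fin (t+1)) => X s ω) ⊤ := by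
  refine iSup₂_le fun s hs => ?_
  have hXs : X s = (fun g : Fin (t+1) → (Fin N → ℝ) => g ⟨s, Nat.lt_succ_of_le hs⟩) ∘
      (fun ω (u : Fin (t+1)) => X u ω) := rfl
  calc MeasurableSpace.comap (X s) inferInstance
      = MeasurableSpace.comap (fun ω (u : Fin (t+1)) => X u ω)
        (MeasurableSpace.comap (fun g : Fin (t+1) → (Fin N → ℝ) => g ⟨s, Nat.lt_succ_of_le hs⟩)
          inferInstance) := by rw [MeasurableSpace.comap_comp]; rfl
    _ ≤ _ := MeasurableSpace.comap_mono le_top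

lemma atom_subset_of_natSigma {t : ℕ} {B : Set Ω} (hB : MeasurableSet[natSigma X t] B)
    {ω₀ : Ω} (hω₀ : ω₀ ∈ B) : pathAtom X t ω₀ ⊆ B := by
  obtain ⟨S, -, hS⟩ := natSigma_le_comap X t B hB
  intro ω' hω'
  have htup : (fun s : Fin (t+1) => X s ω') = fun s : Fin (t+1) => X s ω₀ :=
    funext fun s => hω' s (Nat.lt_succ_iff.mp s.isLt)
  rw [← hS] at hω₀ ⊢
  simpa [Set.mem_preimage, htup] using hω₀

lemma measurableSet_pathAtom (t : ℕ) (ω₀ : Ω) :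
    MeasurableSet[natSigma X t] (pathAtom X t ω₀) := by
  have : pathAtom X t ω₀ = ⋂ s ∈ Set.Iic t, (X s)⁻¹' {X s ω₀} := by
    ext ω'; simp only [pathAtom, Set.mem_setOf_eq, Set.mem_iInter, Set.mem_preimage,
      Set.mem_singleton_iff, Set.mem_Iic]
  rw [this]
  refine MeasurableSet.biInter (Set.to_countable _) fun s hs => ?_
  have hle : MeasurableSpace.comap (X s) inferInstance ≤ natSigma X t := by
    exact le_iSup₂ (f := fun (s : ℕ) (_ : s ∈ Set.Iic t) =>
      MeasurableSpace.comap (X s) inferInstance) s hs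
  exact hle _ ⟨{X s ω₀}, measurableSet_singleton _, rfl⟩

variable (P : Measure Ω) (F : Filtration ℕ mΩ)

lemma natSigma_le_F (hF : IsCompletedNaturalFiltration P X F) (t : ℕ) :
    natSigma X t ≤ F t := fun B hB => (hF t B).mpr ⟨B, hB, by simp⟩

lemma X_measurable (hF : IsCompletedNaturalFiltration P X F) (s : ℕ) :
    Measurable[mΩ] (X s) := by
  rw [measurable_iff_comap_le]
  calc MeasurableSpace.comap (X s) inferInstance ≤ natSigma X s :=
        le_iSup₂ (f := fun (u : ℕ) (_ : u ∈ Set.Iic s) =>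
          MeasurableSpace.comap (X u) inferInstance) s (Set.mem_Iic.mpr le_rfl)
    _ ≤ F s := natSigma_le_F X P F hF s
    _ ≤ mΩ := F.le s

/-- The atom indexed by a word `w`. -/
def atomOf (t : ℕ) (w : Fin (t+1) → Fin N) : Set Ω :=
  {ω | ∀ s : Fin (t+1), X s.val ω = e N (w s)}

lemma pathAtom_eq_atomOf {t : ℕ} {w : Fin (t+1) → Fin N} {ω₀ : Ω}
    (h : ω₀ ∈ atomOf X t w) : pathAtom X t ω₀ = atomOf X t w := by
  ext ω'
  constructor
  · intro h' s
    exact (h' s.val (Nat.lt_succ_iff.mp s.isLt)).trans (h s)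
  · intro h' s hs
    exact (h' ⟨s, Nat.lt_succ_of_le hs⟩).trans (h ⟨s, Nat.lt_succ_of_le hs⟩).symm

lemma exists_atomOf (hX : BasisValued X) (t : ℕ) (ω : Ω) : ∃ w, ω ∈ atomOf X t w := by
  refine ⟨fun s => (hX s.val ω).choose, fun s => (hX s.val ω).choose_spec⟩

lemma ae_pos_pathAtom (hX : BasisValued X) (t : ℕ) :
    ∀ᵐ ω ∂P, 0 < P (pathAtom X t ω) := by
  rw [ae_iff]
  refine measure_mono_null (fun ω hω => ?_)
    ((measure_iUnion_null_iff (ι := {w : Fin (t+1) → Fin N // P (atomOf X t w) = 0})).mpr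
      fun w => w.2)
  simp only [Set.mem_setOf_eq, not_lt, le_zero_iff] at hω
  obtain ⟨w, hw⟩ := exists_atomOf X hX t ω
  have hzero : P (atomOf X t w) = 0 := by
    rw [← pathAtom_eq_atomOf X hw]; exact hω
  exact Set.mem_iUnion.mpr ⟨⟨w, hzero⟩, hw⟩

lemma measure_inter_eq_of_symmDiff_null {B C s : Set Ω} (h : P (symmDiff B C) = 0) :
    P (s ∩ B) = P (s ∩ C) := by
  have h1 : ∀ B C : Set Ω, P (symmDiff B C) = 0 → P (s ∩ B) ≤ P (s ∩ C) := by
    intro B C h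
    calc P (s ∩ B) ≤ P ((s ∩ C) ∪ symmDiff B C) := by
          refine measure_mono fun ω hω => ?_
          by_cases hc : ω ∈ C
          · exact Or.inl ⟨hω.1, hc⟩
          · exact Or.inr (Set.mem_symmDiff.mpr (Or.inl ⟨hω.2, hc⟩))
      _ ≤ P (s ∩ C) + P (symmDiff B C) := measure_union_le _ _
      _ = P (s ∩ C) := by rw [h, add_zero]
  exact le_antisymm (h1 B C h) (h1 C B (by rwa [symmDiff_comm]))

lemma trace_dichotomy (hF : IsCompletedNaturalFiltration P X F) {t : ℕ} {B : Set Ω}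
    (hB : MeasurableSet[F t] B) (ω₀ : Ω) :
    P (pathAtom X t ω₀ ∩ B) = 0 ∨ P (pathAtom X t ω₀ ∩ B) = P (pathAtom X t ω₀) := by
  obtain ⟨C, hC, hnull⟩ := (hF t B).mp hB
  have h1 : P (pathAtom X t ω₀ ∩ B) = P (pathAtom X t ω₀ ∩ C) :=
    measure_inter_eq_of_symmDiff_null P hnull
  by_cases hne : (pathAtom X t ω₀ ∩ C).Nonempty
  · right
    rw [h1]
    obtain ⟨ω₁, hω₁F, hω₁C⟩ := hne
    have hsub : pathAtom X t ω₀ ⊆ C := by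
      rw [← pathAtom_eq_of_mem X hω₁F]
      exact atom_subset_of_natSigma X hC hω₁C
    rw [Set.inter_eq_self_of_subset_left hsub]
  · left
    rw [h1, Set.not_nonempty_iff_eq_empty.mp hne, measure_empty]

lemma exists_mem_of_measure_ne_zero_of_ae {s : Set Ω} (hs : P s ≠ 0) {p : Ω → Prop}
    (hp : ∀ᵐ ω ∂P, p ω) : ∃ ω ∈ s, p ω := by
  have h1 : P (s ∩ {ω | p ω}) ≠ 0 := by
    intro h
    refine hs (le_antisymm ?_ zero_le)
    calc P s ≤ P (s ∩ {ω | p ω}) + P {ω | ¬ p ω} := by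
          refine (measure_mono fun ω hω => ?_).trans (measure_union_le _ _)
          by_cases hpω : p ω
          · exact Or.inl ⟨hω, hpω⟩
          · exact Or.inr hpω
      _ = 0 := by rw [h, ae_iff.mp hp, add_zero]
  obtain ⟨ω, hω⟩ := nonempty_of_measure_ne_zero h1
  exact ⟨ω, hω.1, hω.2⟩


lemma ae_const_on_atom [IsProbabilityMeasure P] (hF : IsCompletedNaturalFiltration P X F)
    {t : ℕ} {g : Ω → ℝ} (hg : StronglyMeasurable[F t] g) {ω₀ : Ω}
    (hpos : 0 < P (pathAtom X t ω₀)) :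
    ∃ c : ℝ, ∀ᵐ ω ∂P, ω ∈ pathAtom X t ω₀ → g ω = c := by
  set Fa := pathAtom X t ω₀ with hFa
  have hgm : Measurable g := (hg.measurable).mono (F.le t) le_rfl
  have hlt : ∀ r : ℝ, MeasurableSet {ω | g ω < r} := fun r =>
    measurableSet_lt hgm measurable_const
  have dich : ∀ r : ℝ, P (Fa ∩ {ω | g ω < r}) = 0 ∨ P (Fa ∩ {ω | g ω < r}) = P Fa :=
    fun r => trace_dichotomy X P F hF
      (show MeasurableSet[F t] {ω | g ω < r} from hg.measurable measurableSet_Iio) ω₀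
  set S : Set ℝ := {r | P (Fa ∩ {ω | g ω < r}) = P Fa} with hS
  have hPFane : P Fa ≠ 0 := hpos.ne'
  have hPFatop : P Fa ≠ ⊤ := measure_ne_top P _
  have hSne : S.Nonempty := by
    by_contra hemp
    have hz : ∀ n : ℕ, P (Fa ∩ {ω | g ω < (n:ℝ)}) = 0 := by
      intro n
      rcases dich (n:ℝ) with h | h
      · exact h
      · exact absurd (Set.nonempty_of_mem (show ((n:ℝ)) ∈ S from h)) hemp
    have hcover : Fa ⊆ ⋃ n : ℕ, Fa ∩ {ω | g ω < (n:ℝ)} := by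
      intro ω hω
      obtain ⟨n, hn⟩ := exists_nat_gt (g ω)
      exact Set.mem_iUnion.mpr ⟨n, hω, hn⟩
    exact hPFane (measure_mono_null hcover (measure_iUnion_null hz))
  have hbdd : BddBelow S := by
    obtain ⟨m, hm⟩ : ∃ m : ℕ, P (Fa ∩ {ω | g ω < -(m:ℝ)}) = 0 := by
      by_contra hcon
      push_neg at hcon
      have hall : ∀ m : ℕ, P (Fa ∩ {ω | g ω < -(m:ℝ)}) = P Fa := fun m =>
        (dich _).resolve_left (hcon m)
      have hanti : Antitone (fun m : ℕ => Fa ∩ {ω | g ω < -(m:ℝ)}) := by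
        intro a b hab ω hω
        have h2 : g ω < -(b:ℝ) := hω.2
        refine ⟨hω.1, show g ω < -(a:ℝ) from lt_of_lt_of_le h2 ?_⟩
        have : (a:ℝ) ≤ (b:ℝ) := Nat.cast_le.mpr hab
        linarith
      have hint : (⋂ m : ℕ, Fa ∩ {ω | g ω < -(m:ℝ)}) = ∅ := by
        ext ω
        simp only [Set.mem_iInter, Set.mem_empty_iff_false, iff_false, not_forall]
        obtain ⟨m, hm⟩ := exists_nat_gt (-(g ω))
        refine ⟨m, fun h => absurd (show g ω < -(m:ℝ) from h.2) (not_lt.mpr (by linarith))⟩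
      have hFameas : MeasurableSet Fa :=
        (F.le t) _ (natSigma_le_F X P F hF t _ (measurableSet_pathAtom X t ω₀))
      have htend := tendsto_measure_iInter_atTop (μ := P)
        (fun m => ((hFameas.inter (hlt _)).nullMeasurableSet)) hanti ⟨0, measure_ne_top _ _⟩
      rw [hint, measure_empty] at htend
      have h2 : Filter.Tendsto (fun _ : ℕ => P Fa) Filter.atTop (nhds 0) :=
        htend.congr fun m => by simp only [Function.comp_apply, hall m]
      exact hPFane (tendsto_nhds_unique tendsto_const_nhds h2)
    refine ⟨-(m:ℝ), fun r hr => ?_⟩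
    by_contra hltm
    push_neg at hltm
    have hmono : P (Fa ∩ {ω | g ω < r}) ≤ P (Fa ∩ {ω | g ω < -(m:ℝ)}) :=
      measure_mono (Set.inter_subset_inter_right _ fun ω hω => hω.trans hltm)
    rw [hr, hm] at hmono
    exact hPFane (le_antisymm hmono zero_le)
  refine ⟨sInf S, ?_⟩
  rw [ae_iff]
  have hnull1 : P (⋃ q : {q : ℚ // (q:ℝ) < sInf S}, Fa ∩ {ω | g ω < (q:ℝ)}) = 0 := by
    refine measure_iUnion_null fun q => ?_
    rcases dich (q:ℝ) with h | h
    · exact h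
    · exact absurd (csInf_le hbdd h) (not_le.mpr q.2)
  have hnull2 : P (⋃ q : {q : ℚ // sInf S < (q:ℝ)}, Fa \ {ω | g ω < (q:ℝ)}) = 0 := by
    refine measure_iUnion_null fun q => ?_
    obtain ⟨r, hrS, hrq⟩ := exists_lt_of_csInf_lt hSne q.2
    have h0 : P (Fa \ {ω | g ω < r}) = 0 := by
      have hmem : P (Fa ∩ {ω | g ω < r}) = P Fa := hrS
      have hadd := measure_inter_add_diff (μ := P) Fa (hlt r)
      rw [hmem] at hadd
      by_contra hne0
      exact absurd hadd (ne_of_gt (ENNReal.lt_add_right hPFatop hne0))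
    exact measure_mono_null
      (Set.diff_subset_diff_right fun ω (hω : g ω < r) => hω.trans hrq) h0
  refine measure_mono_null ?_ (measure_union_null hnull1 hnull2)
  intro ω hω
  simp only [Set.mem_setOf_eq, Classical.not_imp] at hω
  obtain ⟨hωF, hne⟩ := hω
  rcases lt_or_gt_of_ne hne with hlt2 | hgt
  · obtain ⟨q, hq1, hq2⟩ := exists_rat_btwn hlt2
    exact Or.inl (Set.mem_iUnion.mpr ⟨⟨q, hq2⟩, hωF, hq1⟩)
  · obtain ⟨q, hq1, hq2⟩ := exists_rat_btwn hgt
    exact Or.inr (Set.mem_iUnion.mpr ⟨⟨q, hq1⟩, hωF, not_lt.mpr hq2.le⟩)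


lemma mulVec_e {A : Matrix (Fin N) (Fin N) ℝ} (j i : Fin N) :
    A.mulVec (e N j) i = A i j := by
  unfold e
  rw [Matrix.mulVec_single]
  exact mul_one _

lemma atom_transition [IsProbabilityMeasure P] (hX : BasisValued X)
    (hF : IsCompletedNaturalFiltration P X F) {A : Matrix (Fin N) (Fin N) ℝ}
    (hA : IsMarkovChain P F X fun _ => A) {t : ℕ} {ω₀ : Ω} {j : Fin N}
    (hj : X t ω₀ = e N j) (i : Fin N) :
    (P ({ω | X (t+1) ω = e N i} ∩ pathAtom X t ω₀)).toReal
      = A i j * (P (pathAtom X t ω₀)).toReal := by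
  set Fa := pathAtom X t ω₀ with hFa
  have hFameasF : MeasurableSet[F t] Fa :=
    natSigma_le_F X P F hF t _ (measurableSet_pathAtom X t ω₀)
  have hFameas : MeasurableSet Fa := (F.le t) _ hFameasF
  have hXm : ∀ s, Measurable (X s) := X_measurable X P F hF
  have hfmeas : Measurable fun ω => X (t+1) ω i := (measurable_pi_apply i).comp (hXm (t+1))
  have hSmeas : MeasurableSet {ω | X (t+1) ω = e N i} :=
    (hXm (t+1)) (measurableSet_singleton (e N i))
  have hbound : ∀ ω, |X (t+1) ω i| ≤ 1 := by
    intro ω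
    obtain ⟨k, hk⟩ := hX (t+1) ω
    rw [hk]
    by_cases hki : i = k
    · subst hki; rw [e_apply_self]; norm_num
    · rw [e_apply_ne hki]; norm_num
  have hint : Integrable (fun ω => X (t+1) ω i) P :=
    (integrable_const (1:ℝ)).mono' hfmeas.aestronglyMeasurable
      (Filter.Eventually.of_forall hbound)
  have h1 : ∫ ω in Fa, X (t+1) ω i ∂P
      = ∫ ω in Fa, (P[(fun ω' => X (t+1) ω' i)|F t]) ω ∂P :=
    (setIntegral_condExp (F.le t) hint hFameasF).symm
  have h2 : ∫ ω in Fa, (P[(fun ω' => X (t+1) ω' i)|F t]) ω ∂P = ∫ _ω in Fa, A i j ∂P := by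
    refine setIntegral_congr_ae hFameas ?_
    filter_upwards [hA.2 t i] with ω hω hmem
    rw [hω]
    have hXt : X t ω = e N j := (hmem t le_rfl).trans hj
    rw [hXt, mulVec_e]
  have h3 : ∫ _ω in Fa, A i j ∂P = A i j * (P Fa).toReal := by
    rw [setIntegral_const, smul_eq_mul, mul_comm, measureReal_def]
  have h4 : (fun ω => X (t+1) ω i)
      = Set.indicator {ω | X (t+1) ω = e N i} (fun _ => (1:ℝ)) := by
    funext ω
    obtain ⟨k, hk⟩ := hX (t+1) ω
    by_cases hki : k = i
    · subst hki
      rw [Set.indicator_of_mem (show ω ∈ {ω | X (t+1) ω = e N k} from hk), hk, e_apply_self]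
    · have hω : ω ∉ {ω | X (t+1) ω = e N i} := fun hmem =>
        hki (e_inj (hk.symm.trans hmem))
      rw [Set.indicator_of_notMem hω, hk, e_apply_ne (fun h => hki h.symm)]
  have h5 : ∫ ω in Fa, X (t+1) ω i ∂P = (P ({ω | X (t+1) ω = e N i} ∩ Fa)).toReal := by
    rw [h4, setIntegral_indicator hSmeas, setIntegral_const, smul_eq_mul, mul_one,
      Set.inter_comm, measureReal_def]
  rw [← h5, h1, h2, h3]


lemma sandwich [IsProbabilityMeasure P] (hX : BasisValued X)
    (hF : IsCompletedNaturalFiltration P X F) {A : Matrix (Fin N) (Fin N) ℝ}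
    (hA : IsMarkovChain P F X fun _ => A) (hTM : IsTransMat A)
    {ftil : (Fin N → ℝ) → (Fin N → ℝ) → ℝ}
    (hfComp : ComparisonCondition P F X fun ω t _ z => ftil (X t ω) z)
    {j : Fin N} (hj : ∃ t ω₀, X t ω₀ = e N j ∧ 0 < P (pathAtom X t ω₀))
    (z z' : Fin N → ℝ) :
    ∃ i₁ i₂ : Fin N, 0 < A i₁ j ∧ 0 < A i₂ j ∧
      ((z i₁ - z' i₁) - (∑ k, A k j * (z k - z' k)) ≤ ftil (e N j) z - ftil (e N j) z') ∧
      (ftil (e N j) z - ftil (e N j) z' ≤ (z i₂ - z' i₂) - (∑ k, A k j * (z k - z' k))) := by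
  obtain ⟨t, ω₀, hj0, hpos⟩ := hj
  have hPFatop : P (pathAtom X t ω₀) ≠ ⊤ := measure_ne_top _ _
  have hPFapos : 0 < (P (pathAtom X t ω₀)).toReal := ENNReal.toReal_pos hpos.ne' hPFatop
  have hiff : ∀ i, (0 < P ({ω' | X (t + 1) ω' = e N i} ∩ pathAtom X t ω₀) ↔ 0 < A i j) := by
    intro i
    have htr := atom_transition X P F hX hF hA hj0 i
    constructor
    · intro h
      rcases lt_or_eq_of_le (hTM.1 i j) with h' | h'
      · exact h'
      · exfalso
        have h0 : (P ({ω' | X (t + 1) ω' = e N i} ∩ pathAtom X t ω₀)).toReal = 0 := by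
          rw [htr, ← h', zero_mul]
        rcases (ENNReal.toReal_eq_zero_iff _).mp h0 with h2 | h2
        · exact h.ne' h2
        · exact (measure_ne_top _ _) h2
    · intro h
      have h0 : 0 < (P ({ω' | X (t + 1) ω' = e N i} ∩ pathAtom X t ω₀)).toReal := by
        rw [htr]; exact mul_pos h hPFapos
      exact (ENNReal.toReal_pos_iff.mp h0).1
  have hJne : ∃ i, 0 < A i j := by
    by_contra hc
    push_neg at hc
    have hz : ∀ i, A i j = 0 := fun i => le_antisymm (hc i) (hTM.1 i j)
    have hsum := hTM.2 j
    rw [Finset.sum_congr rfl fun i _ => hz i, Finset.sum_const_zero] at hsum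
    norm_num at hsum
  have hcond : ∀ᵐ ω ∂P, ∀ k, (P[(fun ω' => X (t + 1) ω' k)|F t]) ω = A.mulVec (X t ω) k :=
    ae_all_iff.mpr fun k => hA.2 t k
  have key : ∀ a b : Fin N → ℝ, ∃ i, 0 < A i j ∧
      (a i - b i) - (∑ k, A k j * (a k - b k)) ≤ ftil (e N j) a - ftil (e N j) b := by
    intro a b
    obtain ⟨ω, hωF, hω1, hω3⟩ :=
      exists_mem_of_measure_ne_zero_of_ae P hpos.ne' ((hfComp t 0 a b ω₀ hpos).and hcond)
    have hXtω : X t ω = e N j := (hωF t le_rfl).trans hj0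
    set T : Set ℝ := (fun i => (a i - b i) - (∑ k, A k j * (a k - b k))) '' {i | 0 < A i j}
      with hT
    have hTfin : T.Finite := Set.Finite.image _ (Set.toFinite _)
    have hTne : T.Nonempty := by
      obtain ⟨i, hi⟩ := hJne
      exact ⟨_, ⟨i, hi, rfl⟩⟩
    have hdot : ∀ i : Fin N,
        dotR (a - b) (fun k => e N i k - (P[(fun ω'' => X (t + 1) ω'' k)|F t]) ω)
          = (a i - b i) - (∑ k, A k j * (a k - b k)) := by
      intro i
      have hc : ∀ k, (P[(fun ω'' => X (t + 1) ω'' k)|F t]) ω = A k j := fun k => by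
        rw [hω3 k, hXtω, mulVec_e]
      unfold dotR
      have h1 : ∑ k, (a k - b k) * e N i k = a i - b i := dotR_e (fun k => a k - b k) i
      have h2 : ∑ k, (a k - b k) * A k j = ∑ k, A k j * (a k - b k) :=
        Finset.sum_congr rfl fun k _ => mul_comm _ _
      calc ∑ k, (a - b) k * (e N i k - (P[(fun ω'' => X (t + 1) ω'' k)|F t]) ω)
          = ∑ k, ((a k - b k) * e N i k - (a k - b k) * A k j) :=
            Finset.sum_congr rfl fun k _ => by rw [hc k, Pi.sub_apply]; ring
        _ = (a i - b i) - (∑ k, A k j * (a k - b k)) := by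
            rw [Finset.sum_sub_distrib, h1, h2]
    have hmj : minJump P F X t ω₀ a b ω = sInf T := by
      unfold minJump
      congr 1
      ext r
      simp only [Set.mem_setOf_eq, hT, Set.mem_image]
      constructor
      · rintro ⟨i, hip, hr⟩
        exact ⟨i, (hiff i).mp hip, by rw [hr, hdot i]⟩
      · rintro ⟨i, hip, hr⟩
        exact ⟨i, (hiff i).mpr hip, by rw [← hr, hdot i]⟩
    obtain ⟨h0, hne⟩ := hω1 hωF
    have hmin_le : sInf T ≤ ftil (e N j) a - ftil (e N j) b := by
      rcases eq_or_ne (sInf T) 0 with h | h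
      · have h2 := h0 (by rw [hmj, h])
        beta_reduce at h2
        rw [hXtω] at h2
        rw [h, ← h2]
      · have h2 := hne (by rw [hmj]; exact h)
        beta_reduce at h2
        rw [hmj, hXtω] at h2
        exact h2.le
    obtain ⟨i, hi, hieq⟩ := hTne.csInf_mem hTfin
    exact ⟨i, hi, by rw [← hieq] at hmin_le; exact hmin_le⟩
  obtain ⟨i₁, hi₁, hle₁⟩ := key z z'
  obtain ⟨i₂, hi₂, hle₂⟩ := key z' z
  refine ⟨i₁, i₂, hi₁, hi₂, hle₁, ?_⟩
  have hβ' : (∑ k, A k j * (z' k - z k)) = -∑ k, A k j * (z k - z' k) := by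
    rw [← Finset.sum_neg_distrib]
    exact Finset.sum_congr rfl fun k _ => by ring
  linarith [hle₂]


lemma dotR_e_sub_col {A : Matrix (Fin N) (Fin N) ℝ} (d : Fin N → ℝ) (i j : Fin N) :
    dotR d (fun k => e N i k - A k j) = d i - ∑ k, A k j * d k := by
  unfold dotR
  have h1 : ∑ k, d k * e N i k = d i := dotR_e d i
  have h2 : ∑ k, d k * A k j = ∑ k, A k j * d k :=
    Finset.sum_congr rfl fun k _ => mul_comm _ _
  calc ∑ k, d k * (e N i k - A k j)
      = ∑ k, (d k * e N i k - d k * A k j) := Finset.sum_congr rfl fun k _ => by ring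
    _ = d i - ∑ k, A k j * d k := by rw [Finset.sum_sub_distrib, h1, h2]

end Aux
/-- **Stationarity of the Markovian solution** of the discounted BSDE when the chain is
time-homogeneous and the driver does not depend on `t`. -/
theorem markovian_discounted_solution_stationary
    {Ω : Type*} {mΩ : MeasurableSpace Ω} {N : ℕ}
    (P : Measure Ω) [IsProbabilityMeasure P] (F : Filtration ℕ mΩ)
    (X : ℕ → Ω → (Fin N → ℝ)) (hX : BasisValued X)
    (hF : IsCompletedNaturalFiltration P X F)
    (A : Matrix (Fin N) (Fin N) ℝ) (hA : IsMarkovChain P F X fun _ => A)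
    (α : ℝ) (hα : 0 < α)
    (ftil : (Fin N → ℝ) → (Fin N → ℝ) → ℝ)
    (L : ℝ) (hL : 0 < L)
    (hfLip : DriverLipschitzNoY P F X L fun ω t z => ftil (X t ω) z)
    (hfComp : ComparisonCondition P F X fun ω t _ z => ftil (X t ω) z)
    (C : ℝ) (hC : 0 < C) (hfBdd : ∀ (t : ℕ) (ω : Ω), |ftil (X t ω) 0| ≤ C)
    (Y : ℕ → Ω → ℝ) (Z : ℕ → Ω → Fin N → ℝ)
    (hYZ : SolvesDiscountedBSDE P F X α (fun ω t z => ftil (X t ω) z) Y Z)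
    (hYbdd : ∃ D : ℝ, ∀ t : ℕ, ∀ᵐ ω ∂P, |Y t ω| ≤ D) :
    ∃ v : Fin N → ℝ,
      (∀ t : ℕ, Y t =ᵐ[P] fun ω => dotR v (X t ω)) ∧
      ∀ t : ℕ, equivMt P F X t (Z t) fun _ => v := by

  classical
  obtain ⟨D, hD⟩ := hYbdd
  have hTM : IsTransMat A := hA.1 0
  have hα1 : (0:ℝ) < 1 + α := by linarith
  set Reach : Fin N → Prop :=
    fun j => ∃ t ω₀, X t ω₀ = e N j ∧ 0 < P (pathAtom X t ω₀) with hReach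
  set Φ : (Fin N → ℝ) → (Fin N → ℝ) := fun v j =>
    if Reach j then (ftil (e N j) v + ∑ i, A i j * v i) / (1 + α) else 0 with hΦ
  have hcontr : ∀ u w : Fin N → ℝ, dist (Φ u) (Φ w) ≤ (1 + α)⁻¹ * dist u w := by
    intro u w
    rw [dist_pi_le_iff (by positivity)]
    intro j
    rw [Real.dist_eq, hΦ]
    by_cases hr : Reach j
    · simp only [if_pos hr]
      obtain ⟨i₁, i₂, hi₁, hi₂, hl, hu⟩ := sandwich X P F hX hF hA hTM hfComp hr u w
      have hb1' : |u i₁ - w i₁| ≤ dist u w := by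
        rw [← Real.dist_eq]; exact dist_le_pi_dist u w i₁
      have hb2' : |u i₂ - w i₂| ≤ dist u w := by
        rw [← Real.dist_eq]; exact dist_le_pi_dist u w i₂
      have hb1 := abs_le.mp hb1'
      have hb2 := abs_le.mp hb2'
      have hsub : (∑ i, A i j * u i) - (∑ i, A i j * w i) = ∑ i, A i j * (u i - w i) := by
        rw [← Finset.sum_sub_distrib]
        exact Finset.sum_congr rfl fun i _ => by ring
      have habs : |(ftil (e N j) u + ∑ i, A i j * u i)
          - (ftil (e N j) w + ∑ i, A i j * w i)| ≤ dist u w := by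
        rw [abs_le]
        constructor <;> linarith
      rw [div_sub_div_same, abs_div, abs_of_pos hα1, inv_mul_eq_div]
      gcongr
    · simp only [if_neg hr, sub_self, abs_zero]
      positivity
  have hK : ContractingWith ⟨(1+α)⁻¹, by positivity⟩ Φ := by
    constructor
    · apply NNReal.coe_lt_coe.mp
      show (1+α)⁻¹ < 1
      rw [inv_lt_one₀ hα1]
      linarith
    · exact LipschitzWith.of_dist_le_mul fun u w => hcontr u w
  set v : Fin N → ℝ := ContractingWith.fixedPoint Φ hK with hv
  have hfix : Φ v = v := hK.fixedPoint_isFixedPt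
  have hvfix : ∀ j, Reach j → (1 + α) * v j = ftil (e N j) v + ∑ i, A i j * v i := by
    intro j hr
    have hj : Φ v j = v j := congrFun hfix j
    rw [hΦ] at hj
    simp only [if_pos hr] at hj
    rw [div_eq_iff hα1.ne'] at hj
    linarith
  have hdotXb : ∀ t ω, |dotR v (X t ω)| ≤ ∑ k, |v k| := by
    intro t ω
    obtain ⟨i, hi⟩ := hX t ω
    rw [hi, dotR_e]
    exact Finset.single_le_sum (f := fun k => |v k|) (fun k _ => abs_nonneg _)
      (Finset.mem_univ i)
  set D' : ℝ := D + ∑ k, |v k| with hD'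
  have hXFt : ∀ t, Measurable[F t] (X t) := by
    intro t
    rw [measurable_iff_comap_le]
    exact le_trans (le_iSup₂ (f := fun (u : ℕ) (_ : u ∈ Set.Iic t) =>
      MeasurableSpace.comap (X u) inferInstance) t (Set.mem_Iic.mpr le_rfl))
      (natSigma_le_F X P F hF t)
  have hδmeas : ∀ t, StronglyMeasurable[F t] (fun ω => Y t ω - dotR v (X t ω)) := by
    intro t
    refine (hYZ.1 t).stronglyMeasurable.sub ?_
    have hm : Measurable[F t] fun ω => dotR v (X t ω) := by
      unfold dotR
      exact Finset.measurable_sum _ fun i _ =>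
        measurable_const.mul ((measurable_pi_apply i).comp (hXFt t))
    exact hm.stronglyMeasurable
  have hZmeas : ∀ t i, StronglyMeasurable[F t] (fun ω => Z t ω i) := fun t i =>
    (continuous_apply i).comp_stronglyMeasurable (hYZ.2.1 t).stronglyMeasurable
  have honestep : ∀ t : ℕ, ∀ᵐ ω ∂P, Y (t+1) ω
      = (1 + α) * Y t ω - ftil (X t ω) (Z t ω) + dotR (Z t ω) (Mdiff P F X t ω) := by
    intro t
    filter_upwards [hYZ.2.2 t (t+1) (Nat.lt_succ_self t)] with ω hω
    rw [hω, Nat.Ico_succ_singleton, Finset.sum_singleton, Finset.sum_singleton]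
    beta_reduce
    ring
  have hcond : ∀ t : ℕ, ∀ᵐ ω ∂P, ∀ k,
      (P[(fun ω' => X (t + 1) ω' k)|F t]) ω = A.mulVec (X t ω) k :=
    fun t => ae_all_iff.mpr fun k => hA.2 t k
  -- the contraction step for the essential bound
  have hstep : ∀ t k : ℕ, (∀ᵐ ω ∂P, |Y (t+1) ω - dotR v (X (t+1) ω)| ≤ D' / (1+α)^k) →
      ∀ᵐ ω ∂P, |Y t ω - dotR v (X t ω)| ≤ D' / (1+α)^(k+1) := by
    intro t k IH
    rw [ae_iff]
    by_contra hGne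
    set G : Set Ω := {ω | ¬ |Y t ω - dotR v (X t ω)| ≤ D' / (1+α)^(k+1)} with hG
    set H1 : Set Ω := {ω | 0 < P (pathAtom X t ω)} with hH1
    have hH1c : P {ω | ¬ 0 < P (pathAtom X t ω)} = 0 := ae_iff.mp (ae_pos_pathAtom X P hX t)
    have hex : ∃ w : Fin (t+1) → Fin N, P (atomOf X t w ∩ (G ∩ H1)) ≠ 0 := by
      by_contra hall
      push_neg at hall
      have h0 : P (G ∩ H1) = 0 := by
        refine measure_mono_null (fun ω hω => ?_) (measure_iUnion_null hall)
        obtain ⟨w, hw⟩ := exists_atomOf X hX t ω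
        exact Set.mem_iUnion.mpr ⟨w, hw, hω⟩
      refine hGne (le_antisymm ?_ zero_le)
      calc P G ≤ P (G ∩ H1) + P {ω | ¬ 0 < P (pathAtom X t ω)} := by
            refine (measure_mono fun ω hω => ?_).trans (measure_union_le _ _)
            by_cases hh : 0 < P (pathAtom X t ω)
            · exact Or.inl ⟨hω, hh⟩
            · exact Or.inr hh
        _ = 0 := by rw [h0, hH1c, add_zero]
    obtain ⟨w, hw⟩ := hex
    obtain ⟨ω₀, hω₀⟩ := nonempty_of_measure_ne_zero hw
    have hFeq : pathAtom X t ω₀ = atomOf X t w := pathAtom_eq_atomOf X hω₀.1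
    have hpos : 0 < P (pathAtom X t ω₀) := hω₀.2.2
    obtain ⟨j, hj⟩ := hX t ω₀
    obtain ⟨c, hc⟩ := ae_const_on_atom X P F hF (hδmeas t) hpos
    choose zz hzz using fun i => ae_const_on_atom X P F hF (hZmeas t i) hpos
    have hPFG : P (pathAtom X t ω₀ ∩ G) ≠ 0 := by
      intro h0
      refine hw (measure_mono_null (fun ω hω => ?_) h0)
      exact ⟨by rw [hFeq]; exact hω.1, hω.2.1⟩
    have hcb : D' / (1+α)^(k+1) < |c| := by
      obtain ⟨ω₁, hω₁, hcω₁⟩ := exists_mem_of_measure_ne_zero_of_ae P hPFG hc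
      rw [← hcω₁ hω₁.1]
      exact not_le.mp hω₁.2
    have hreach : Reach j := ⟨t, ω₀, hj, hpos⟩
    obtain ⟨i₁, i₂, hi₁, hi₂, hl, hu⟩ := sandwich X P F hX hF hA hTM hfComp hreach zz v
    have hpow : (1+α) * (D' / (1+α)^(k+1)) = D' / (1+α)^k := by
      rw [pow_succ]
      field_simp
    have hfixj := hvfix j hreach
    have hsplit : ∑ k', A k' j * (zz k' - v k') =
        (∑ k', A k' j * zz k') - ∑ k', A k' j * v k' := by
      rw [← Finset.sum_sub_distrib]
      exact Finset.sum_congr rfl fun k' _ => by ring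
    -- a common computation of δ_{t+1} at a good point in the atom with next state i
    have hδnext : ∀ i : Fin N, 0 < A i j → ∃ ω₂,
        |Y (t+1) ω₂ - dotR v (X (t+1) ω₂)| ≤ D' / (1+α)^k ∧
        Y (t+1) ω₂ - dotR v (X (t+1) ω₂)
          = (1+α) * c + ((zz i - v i) - (∑ k', A k' j * (zz k' - v k'))
              - (ftil (e N j) zz - ftil (e N j) v)) := by
      intro i hi
      have hSne : P ({ω | X (t+1) ω = e N i} ∩ pathAtom X t ω₀) ≠ 0 := by
        intro h0
        have htr := atom_transition X P F hX hF hA hj i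
        rw [h0, ENNReal.toReal_zero] at htr
        have hmp := mul_pos hi (ENNReal.toReal_pos hpos.ne' (measure_ne_top _ _))
        linarith
      obtain ⟨ω₂, hω₂, hone, hcnd, hzzi, hcc, hIH⟩ :=
        exists_mem_of_measure_ne_zero_of_ae P hSne
          ((honestep t).and ((hcond t).and ((ae_all_iff.mpr hzz).and (hc.and IH))))
      have hmem : ω₂ ∈ pathAtom X t ω₀ := hω₂.2
      have hXt1 : X (t+1) ω₂ = e N i := hω₂.1
      have hXtω₂ : X t ω₂ = e N j := (hmem t le_rfl).trans hj
      have hZω₂ : Z t ω₂ = zz := funext fun i' => hzzi i' hmem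
      have hYtc : Y t ω₂ = c + v j := by
        have h := hcc hmem
        rw [hXtω₂, dotR_e] at h
        linarith
      have hMd : Mdiff P F X t ω₂ = fun k' => e N i k' - A k' j := by
        funext k'
        show X (t+1) ω₂ k' - _ = _
        rw [hcnd k', hXtω₂, mulVec_e, hXt1]
      refine ⟨ω₂, hIH, ?_⟩
      rw [hone, hXt1, dotR_e, hZω₂, hXtω₂, hMd, dotR_e_sub_col, hYtc]
      linarith [hsplit]
    rcases le_or_gt 0 c with hc0 | hc0
    · obtain ⟨ω₂, hIH2, heq⟩ := hδnext i₂ hi₂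
      have hge : (1+α) * c ≤ Y (t+1) ω₂ - dotR v (X (t+1) ω₂) := by
        rw [heq]
        linarith
      have habs := (abs_le.mp hIH2).2
      have hgt : D' / (1+α)^k < (1+α) * c := by
        rw [← hpow]
        have : D' / (1+α)^(k+1) < c := lt_of_lt_of_le hcb (le_of_eq (abs_of_nonneg hc0))
        exact mul_lt_mul_of_pos_left this hα1
      linarith
    · obtain ⟨ω₂, hIH2, heq⟩ := hδnext i₁ hi₁
      have hle : Y (t+1) ω₂ - dotR v (X (t+1) ω₂) ≤ (1+α) * c := by
        rw [heq]
        linarith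
      have habs := (abs_le.mp hIH2).1
      have hgt : (1+α) * c < -(D' / (1+α)^k) := by
        rw [← hpow]
        have h1 : D' / (1+α)^(k+1) < -c := by
          have := hcb
          rw [abs_of_neg hc0] at this
          linarith
        nlinarith
      linarith
  -- iterate the step
  have hall : ∀ k t : ℕ, ∀ᵐ ω ∂P, |Y t ω - dotR v (X t ω)| ≤ D' / (1+α)^k := by
    intro k
    induction k with
    | zero =>
      intro t
      filter_upwards [hD t] with ω hω
      rw [pow_zero, div_one, hD']
      calc |Y t ω - dotR v (X t ω)| ≤ |Y t ω| + |dotR v (X t ω)| := abs_sub _ _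
        _ ≤ D + ∑ k, |v k| := add_le_add hω (hdotXb t ω)
    | succ k ih => exact fun t => hstep t k (ih (t+1))
  have hYv : ∀ t : ℕ, Y t =ᵐ[P] fun ω => dotR v (X t ω) := by
    intro t
    have hae : ∀ᵐ ω ∂P, ∀ k : ℕ, |Y t ω - dotR v (X t ω)| ≤ D' / (1+α)^k :=
      ae_all_iff.mpr fun k => hall k t
    filter_upwards [hae] with ω hω
    have htend : Filter.Tendsto (fun k : ℕ => D' / (1+α)^k) Filter.atTop (nhds 0) := by
      have hrw : (fun k : ℕ => D' / (1+α)^k) = fun k : ℕ => D' * ((1+α)⁻¹)^k := by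
        funext k
        rw [div_eq_mul_inv, inv_pow]
      rw [hrw]
      have h0 : Filter.Tendsto (fun k : ℕ => ((1+α)⁻¹)^k) Filter.atTop (nhds 0) := by
        refine tendsto_pow_atTop_nhds_zero_of_lt_one (by positivity) ?_
        rw [inv_lt_one₀ hα1]
        linarith
      simpa using h0.const_mul D'
    have hle0 : |Y t ω - dotR v (X t ω)| ≤ 0 :=
      ge_of_tendsto htend (Filter.Eventually.of_forall hω)
    have h0 : Y t ω - dotR v (X t ω) = 0 :=
      abs_eq_zero.mp (le_antisymm hle0 (abs_nonneg _))
    linarith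
  refine ⟨v, hYv, ?_⟩
  -- the Z part
  intro t
  have hW : ∀ᵐ ω ∂P, dotR (Z t ω - v) (Mdiff P F X t ω) = 0 := by
    have hperatom : ∀ w : Fin (t+1) → Fin N, ∀ᵐ ω ∂P, ω ∈ atomOf X t w →
        dotR (Z t ω - v) (Mdiff P F X t ω) = 0 := by
      intro w
      by_cases hw : P (atomOf X t w) = 0
      · rw [ae_iff]
        refine measure_mono_null (fun ω hω => ?_) hw
        simp only [Classical.not_imp, Set.mem_setOf_eq] at hω
        exact hω.1
      · obtain ⟨ω₀, hω₀⟩ := nonempty_of_measure_ne_zero hw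
        have hFeq : pathAtom X t ω₀ = atomOf X t w := pathAtom_eq_atomOf X hω₀
        have hpos : 0 < P (pathAtom X t ω₀) := by
          rw [hFeq]
          exact zero_lt_iff.mpr hw
        obtain ⟨j, hj⟩ := hX t ω₀
        have hreach : Reach j := ⟨t, ω₀, hj, hpos⟩
        have hfixj := hvfix j hreach
        choose zz hzz using fun i => ae_const_on_atom X P F hF (hZmeas t i) hpos
        have hsplit : ∑ k', A k' j * (zz k' - v k') =
            (∑ k', A k' j * zz k') - ∑ k', A k' j * v k' := by
          rw [← Finset.sum_sub_distrib]
          exact Finset.sum_congr rfl fun k' _ => by ring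
        have hkey : ∀ i, 0 < A i j → (zz i - v i) - (∑ k', A k' j * (zz k' - v k'))
            = ftil (e N j) zz - ftil (e N j) v := by
          intro i hi
          have hSne : P ({ω | X (t+1) ω = e N i} ∩ pathAtom X t ω₀) ≠ 0 := by
            intro h0
            have htr := atom_transition X P F hX hF hA hj i
            rw [h0, ENNReal.toReal_zero] at htr
            have hmp := mul_pos hi (ENNReal.toReal_pos hpos.ne' (measure_ne_top _ _))
            linarith
          obtain ⟨ω₂, hω₂, hone, hcnd, hzzi, hYt, hYt1⟩ :=
            exists_mem_of_measure_ne_zero_of_ae P hSne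
              ((honestep t).and ((hcond t).and ((ae_all_iff.mpr hzz).and
                ((hYv t).and (hYv (t+1))))))
          have hmem : ω₂ ∈ pathAtom X t ω₀ := hω₂.2
          have hXt1 : X (t+1) ω₂ = e N i := hω₂.1
          have hXtω₂ : X t ω₂ = e N j := (hmem t le_rfl).trans hj
          have hZω₂ : Z t ω₂ = zz := funext fun i' => hzzi i' hmem
          have hYtv : Y t ω₂ = v j := by
            have h := hYt
            beta_reduce at h
            rw [h, hXtω₂, dotR_e]
          have hY1v : Y (t+1) ω₂ = v i := by
            have h := hYt1
            beta_reduce at h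
            rw [h, hXt1, dotR_e]
          have hMd : Mdiff P F X t ω₂ = fun k' => e N i k' - A k' j := by
            funext k'
            show X (t+1) ω₂ k' - _ = _
            rw [hcnd k', hXtω₂, mulVec_e, hXt1]
          rw [hY1v, hYtv, hZω₂, hXtω₂, hMd, dotR_e_sub_col] at hone
          linarith [hsplit]
        have hfd0 : ftil (e N j) zz - ftil (e N j) v = 0 := by
          set β : ℝ := ∑ k', A k' j * (zz k' - v k') with hβ
          have hsum : ∑ k', A k' j * (zz k' - v k')
              = ∑ k', A k' j * (β + (ftil (e N j) zz - ftil (e N j) v)) := by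
            refine Finset.sum_congr rfl fun k' _ => ?_
            rcases lt_or_eq_of_le (hTM.1 k' j) with h | h
            · have := hkey k' h
              have h2 : zz k' - v k' = β + (ftil (e N j) zz - ftil (e N j) v) := by
                rw [hβ]; linarith
              rw [h2]
            · rw [← h, zero_mul, zero_mul]
          rw [← Finset.sum_mul, hTM.2 j, one_mul] at hsum
          rw [← hβ] at hsum
          linarith
        have hnext : ∀ i : Fin N, ∀ᵐ ω ∂P,
            (ω ∈ pathAtom X t ω₀ ∧ X (t+1) ω = e N i) → 0 < A i j := by
          intro i
          rcases lt_or_eq_of_le (hTM.1 i j) with h | h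
          · exact Filter.Eventually.of_forall fun ω _ => h
          · have hnull : P ({ω | X (t+1) ω = e N i} ∩ pathAtom X t ω₀) = 0 := by
              have htr := atom_transition X P F hX hF hA hj i
              rw [← h, zero_mul] at htr
              rcases (ENNReal.toReal_eq_zero_iff _).mp htr with h2 | h2
              · exact h2
              · exact absurd h2 (measure_ne_top _ _)
            rw [ae_iff]
            refine measure_mono_null (fun ω hω => ?_) hnull
            simp only [Classical.not_imp, Set.mem_setOf_eq] at hω
            exact ⟨hω.1.2, hω.1.1⟩
        filter_upwards [hcond t, ae_all_iff.mpr hzz, ae_all_iff.mpr hnext]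
          with ω hcnd hzzi hnx hmemW
        have hmem : ω ∈ pathAtom X t ω₀ := by
          rw [hFeq]
          exact hmemW
        obtain ⟨i, hXi⟩ := hX (t+1) ω
        have hij : 0 < A i j := hnx i ⟨hmem, hXi⟩
        have hZω : Z t ω = zz := funext fun i' => hzzi i' hmem
        have hXtω : X t ω = e N j := (hmem t le_rfl).trans hj
        have hMd : Mdiff P F X t ω = fun k' => e N i k' - A k' j := by
          funext k'
          show X (t+1) ω k' - _ = _
          rw [hcnd k', hXtω, mulVec_e, hXi]
        rw [hZω, hMd]
        have hdot : dotR (zz - v) (fun k' => e N i k' - A k' j)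
            = (zz - v) i - ∑ k', A k' j * (zz - v) k' := dotR_e_sub_col (zz - v) i j
        rw [hdot]
        have hk := hkey i hij
        rw [hfd0] at hk
        simpa [Pi.sub_apply] using hk
    have hcomb : ∀ᵐ ω ∂P, ∀ w : Fin (t+1) → Fin N,
        ω ∈ atomOf X t w → dotR (Z t ω - v) (Mdiff P F X t ω) = 0 :=
      ae_all_iff.mpr hperatom
    filter_upwards [hcomb] with ω hω
    obtain ⟨w, hw⟩ := exists_atomOf X hX t ω
    exact hω w hw
  show seminormSq P F X t (fun ω => Z t ω - (fun _ => v) ω) =ᵐ[P] 0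
  unfold seminormSq
  have hint : (fun ω => (dotR ((fun ω' => Z t ω' - v) ω) (Mdiff P F X t ω))^2)
      =ᵐ[P] (0 : Ω → ℝ) := by
    filter_upwards [hW] with ω hω
    show (dotR (Z t ω - v) (Mdiff P F X t ω))^2 = 0
    rw [hω]
    norm_num
  exact (condExp_congr_ae hint).trans (by rw [condExp_zero])
end DiscreteEBSDE
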